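/- Let n ≥ 3. For every M ∈ M_sym0 and every ξ ∈ ℝⁿ with |ξ| = 1, one has 𝔸[ξ]M = 0 if and only if there exists v ∈ ℝⁿ such that M = v⊙ξ − ((v·ξ)/n)·Id. Consequently the wave cone Λ_𝒜 := ⋃_{|ξ|=1} Ker(𝔸[ξ]) equals {v⊙ξ − ((v·ξ)/n)·Id : v ∈ ℝⁿ, ξ ∈ ℝⁿ \ {0}}. -/

import Mathlib

/-- Euclidean dot product on `Fin n → ℝ`. -/
def dotp {n : ℕ} (a b : Fin n → ℝ) : ℝ := ∑ i, a i * b i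

/-- Matrix–vector multiplication. -/
def mulv {n : ℕ} (M : Fin n → Fin n → ℝ) (v : Fin n → ℝ) (i : Fin n) : ℝ := ∑ j, M i j * v j

/-- `a ⊗_{ℰ_d} b := a⊙b − ((a·b)/n)·Id`, the deviatoric symmetric tensor product. -/
noncomputable def edT (n : ℕ) (a b : Fin n → ℝ) (i j : Fin n) : ℝ :=
  (a i * b j + a j * b i) / 2 - (dotp a b / (n : ℝ)) * (if i = j then 1 else 0)

/-- The symbol `𝔸[ξ]M := |ξ|²(Mξ⊗ξ + ξ⊗Mξ) − |ξ|⁴·M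
  − ((ξᵀMξ)/(n−1))·[(n−2)·ξ⊗ξ + |ξ|²·Id]`. -/
noncomputable def symA (n : ℕ) (ξ : Fin n → ℝ) (M : Fin n → Fin n → ℝ) (i j : Fin n) : ℝ :=
  dotp ξ ξ * (mulv M ξ i * ξ j + ξ i * mulv M ξ j) - (dotp ξ ξ) ^ 2 * M i j
    - (dotp ξ (mulv M ξ)) / ((n : ℝ) - 1) *
        (((n : ℝ) - 2) * (ξ i * ξ j) + dotp ξ ξ * (if i = j then 1 else 0))

lemma dotp_comm {n : ℕ} (a b : Fin n → ℝ) : dotp a b = dotp b a :=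
  Finset.sum_congr rfl fun i _ => mul_comm _ _

lemma mulv_edT {n : ℕ} (v ξ : Fin n → ℝ) (i : Fin n) :
    mulv (edT n v ξ) ξ i
      = v i * dotp ξ ξ / 2 + dotp v ξ * ξ i / 2 - dotp v ξ / n * ξ i := by
  unfold mulv
  have h : ∀ j : Fin n, edT n v ξ i j * ξ j
      = (v i * (ξ j * ξ j)) / 2 + (ξ i * (v j * ξ j)) / 2
        - (dotp v ξ / n) * (if i = j then ξ j else 0) := by
    intro j; by_cases h : i = j <;> simp [edT, h] <;> ring
  rw [Finset.sum_congr rfl fun j _ => h j]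
  rw [Finset.sum_sub_distrib, Finset.sum_add_distrib]
  simp [← Finset.sum_div, ← Finset.mul_sum, dotp]
  ring


lemma dotp_mulv_edT {n : ℕ} (v ξ : Fin n → ℝ) (hξ : dotp ξ ξ = 1) :
    dotp ξ (mulv (edT n v ξ) ξ) = dotp v ξ / 2 + dotp v ξ / 2 - dotp v ξ / n := by
  unfold dotp
  have h : ∀ i : Fin n, ξ i * mulv (edT n v ξ) ξ i
      = (ξ i * v i) / 2 + dotp v ξ / 2 * (ξ i * ξ i) - dotp v ξ / n * (ξ i * ξ i) := by
    intro i; rw [mulv_edT, hξ]; ring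
  rw [Finset.sum_congr rfl fun i _ => h i]
  rw [Finset.sum_sub_distrib, Finset.sum_add_distrib]
  simp only [← Finset.sum_div, ← Finset.mul_sum]
  have h2 : (∑ i, ξ i * ξ i) = 1 := hξ
  have h3 : (∑ i, ξ i * v i) = dotp v ξ := by rw [← dotp_comm]; rfl
  have h4 : (∑ x : Fin n, v x * ξ x) = dotp v ξ := rfl
  simp only [h2, h3, h4]; ring

lemma symA_edT {n : ℕ} (hn : 3 ≤ n) (v ξ : Fin n → ℝ) (hξ : dotp ξ ξ = 1) (i j : Fin n) :
    symA n ξ (edT n v ξ) i j = 0 := by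
  have hn0 : (n : ℝ) ≠ 0 := by positivity
  have hn1 : (n : ℝ) - 1 ≠ 0 := by
    have : (3:ℝ) ≤ (n:ℝ) := by exact_mod_cast hn
    linarith
  unfold symA
  rw [mulv_edT, mulv_edT, dotp_mulv_edT v ξ hξ, hξ]
  unfold edT
  by_cases h : i = j <;> simp only [h, if_true, if_false] <;> field_simp <;> ring

lemma forward_dir {n : ℕ} (hn : 3 ≤ n) (M : Fin n → Fin n → ℝ)
    (ξ : Fin n → ℝ) (hξ : dotp ξ ξ = 1) (hA : ∀ i j, symA n ξ M i j = 0) :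
    ∃ v : Fin n → ℝ, ∀ i j, M i j = edT n v ξ i j := by
  have hn0 : (n : ℝ) ≠ 0 := by positivity
  have hn1 : (n : ℝ) - 1 ≠ 0 := by
    have : (3:ℝ) ≤ (n:ℝ) := by exact_mod_cast hn
    linarith
  set S : ℝ := dotp ξ (mulv M ξ) with hS
  refine ⟨fun i => 2 * mulv M ξ i - S * ((n:ℝ) - 2) / ((n:ℝ) - 1) * ξ i, ?_⟩
  intro i j
  have hdv : dotp (fun i => 2 * mulv M ξ i - S * ((n:ℝ) - 2) / ((n:ℝ) - 1) * ξ i) ξ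
      = S * (n:ℝ) / ((n:ℝ) - 1) := by
    unfold dotp
    have h : ∀ k : Fin n, (2 * mulv M ξ k - S * ((n:ℝ) - 2) / ((n:ℝ) - 1) * ξ k) * ξ k
        = 2 * (ξ k * mulv M ξ k) - S * ((n:ℝ) - 2) / ((n:ℝ) - 1) * (ξ k * ξ k) := by
      intro k; ring
    rw [Finset.sum_congr rfl fun k _ => h k, Finset.sum_sub_distrib]
    simp only [← Finset.mul_sum]
    rw [show (∑ k : Fin n, ξ k * mulv M ξ k) = S from rfl, show (∑ k : Fin n, ξ k * ξ k) = 1 from hξ]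
    field_simp; ring
  have hAij := hA i j
  unfold symA at hAij
  rw [hξ] at hAij
  unfold edT
  rw [hdv]
  rw [← hS] at hAij
  by_cases h : i = j
  · simp only [h, if_true] at hAij ⊢
    field_simp at hAij ⊢
    linear_combination (-2:ℝ) * hAij
  · simp only [h, if_false] at hAij ⊢
    field_simp at hAij ⊢
    linear_combination (-2:ℝ) * hAij

lemma edT_symm {n : ℕ} (v ξ : Fin n → ℝ) (i j : Fin n) : edT n v ξ i j = edT n v ξ j i := by
  unfold edT
  by_cases h : i = j
  · simp [h]
  · simp [h, Ne.symm h]; ring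

lemma edT_trace {n : ℕ} (hn : 3 ≤ n) (v ξ : Fin n → ℝ) : ∑ i, edT n v ξ i i = 0 := by
  have hn0 : (n : ℝ) ≠ 0 := by positivity
  unfold edT
  rw [Finset.sum_sub_distrib]
  simp only [if_true, reduceIte, mul_one]
  rw [Finset.sum_const, Finset.card_univ, Fintype.card_fin, nsmul_eq_mul]
  have h1 : (∑ i : Fin n, (v i * ξ i + v i * ξ i) / 2) = dotp v ξ := by
    rw [← Finset.sum_div]
    unfold dotp
    rw [show (∑ i : Fin n, (v i * ξ i + v i * ξ i)) = 2 * ∑ i, v i * ξ i by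
      rw [Finset.mul_sum]; exact Finset.sum_congr rfl fun i _ => by ring]
    ring
  rw [h1]
  field_simp
  ring

lemma edT_scale {n : ℕ} (v ξ : Fin n → ℝ) (c : ℝ) (hc : c ≠ 0) (i j : Fin n) :
    edT n v ξ i j = edT n (fun k => c * v k) (fun k => c⁻¹ * ξ k) i j := by
  have hd : dotp (fun k => c * v k) (fun k => c⁻¹ * ξ k) = dotp v ξ := by
    unfold dotp
    exact Finset.sum_congr rfl fun k _ => by field_simp
  unfold edT
  rw [hd]
  have h1 : c * v i * (c⁻¹ * ξ j) = v i * ξ j := by field_simp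
  have h2 : c * v j * (c⁻¹ * ξ i) = v j * ξ i := by field_simp
  rw [h1, h2]

lemma dotp_pos {n : ℕ} (ξ : Fin n → ℝ) (hξ : ξ ≠ 0) : 0 < dotp ξ ξ := by
  obtain ⟨i, hi⟩ := Function.ne_iff.mp hξ
  exact Finset.sum_pos' (fun k _ => mul_self_nonneg _)
    ⟨i, Finset.mem_univ i, mul_self_pos.mpr hi⟩


/-- wave cone of the annihilator: for `n ≥ 3`, a symmetric trace-free
matrix `M` and a unit vector `ξ` satisfy `𝔸[ξ]M = 0` iff `M = v⊙ξ − ((v·ξ)/n)·Id` for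
some `v ∈ ℝⁿ`; consequently `Λ_𝒜 = ⋃_{|ξ|=1} Ker 𝔸[ξ] = {v⊙ξ − ((v·ξ)/n)Id : v ∈ ℝⁿ, ξ ≠ 0}`. -/
theorem wave_cone_of_annihilator {n : ℕ} (hn : 3 ≤ n) :
    (∀ M : Fin n → Fin n → ℝ, (∀ i j, M i j = M j i) → (∑ i, M i i = 0) →
      ∀ ξ : Fin n → ℝ, dotp ξ ξ = 1 →
        ((∀ i j, symA n ξ M i j = 0) ↔ ∃ v : Fin n → ℝ, ∀ i j, M i j = edT n v ξ i j)) ∧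
    {M : Fin n → Fin n → ℝ | (∀ i j, M i j = M j i) ∧ (∑ i, M i i = 0) ∧
        ∃ ξ : Fin n → ℝ, dotp ξ ξ = 1 ∧ ∀ i j, symA n ξ M i j = 0}
      = {M : Fin n → Fin n → ℝ |
          ∃ (v ξ : Fin n → ℝ), ξ ≠ 0 ∧ ∀ i j, M i j = edT n v ξ i j} := by
  constructor
  · intro M hsym htr ξ hξ
    constructor
    · exact forward_dir hn M ξ hξ
    · rintro ⟨v, hv⟩ i j
      have hfun : M = edT n v ξ := by
        funext i j; exact hv i j
      rw [hfun]
      exact symA_edT hn v ξ hξ i j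
  · ext M
    simp only [Set.mem_setOf_eq]
    constructor
    · rintro ⟨hsym, htr, ξ, hξ, hA⟩
      obtain ⟨v, hv⟩ := forward_dir hn M ξ hξ hA
      refine ⟨v, ξ, ?_, hv⟩
      intro h
      rw [h] at hξ
      simp [dotp] at hξ
    · rintro ⟨v, ξ, hξ0, hv⟩
      have hpos := dotp_pos ξ hξ0
      set r : ℝ := Real.sqrt (dotp ξ ξ) with hr
      have hrpos : 0 < r := Real.sqrt_pos.mpr hpos
      have hr2 : r * r = dotp ξ ξ := Real.mul_self_sqrt hpos.le
      have hv' : ∀ i j, M i j = edT n (fun k => r * v k) (fun k => r⁻¹ * ξ k) i j := by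
        intro i j; rw [hv i j]; exact edT_scale v ξ r hrpos.ne' i j
      have hunit : dotp (fun k => r⁻¹ * ξ k) (fun k => r⁻¹ * ξ k) = 1 := by
        unfold dotp
        rw [show (∑ k : Fin n, r⁻¹ * ξ k * (r⁻¹ * ξ k)) = r⁻¹ * r⁻¹ * ∑ k, ξ k * ξ k by
          rw [Finset.mul_sum]; exact Finset.sum_congr rfl fun k _ => by ring]
        rw [show (∑ k : Fin n, ξ k * ξ k) = dotp ξ ξ from rfl, ← hr2]
        field_simp
      have hMfun : M = edT n (fun k => r * v k) (fun k => r⁻¹ * ξ k) := by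
        funext i j; exact hv' i j
      refine ⟨?_, ?_, fun k => r⁻¹ * ξ k, hunit, ?_⟩
      · intro i j; rw [hv' i j, hv' j i]; exact edT_symm _ _ i j
      · rw [hMfun]; exact edT_trace hn _ _
      · intro i j; rw [hMfun]; exact symA_edT hn _ _ hunit i j
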